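/- Let ρ, σ be density matrices and let Q₊, Q₋ be the positive and negative parts of ρ − σ (so ρ − σ = Q₊ − Q₋, Q₊, Q₋ ≥ 0, Q₊Q₋ = 0). A POVM {E_m} satisfies Σ_m |tr(E_m(ρ−σ))| = tr|ρ−σ| if and only if for each m, Q₊E_m = 0 or Q₋E_m = 0. -/

import Mathlib

open scoped ComplexOrder
open scoped MatrixOrder

open Classical in
/-- The unique positive semidefinite square root of a positive semidefinite matrix
(junk value 0 otherwise). -/
noncomputable def psqrt {n : Type*} [Fintype n] [DecidableEq n] (X : Matrix n n ℂ) :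
    Matrix n n ℂ :=
  if h : X.PosSemidef then
    (h.1.eigenvectorUnitary : Matrix n n ℂ) * Matrix.diagonal ((↑) ∘ (√·) ∘ h.1.eigenvalues) *
      (star (h.1.eigenvectorUnitary : Matrix n n ℂ))
  else 0

open Matrix in
lemma trace_conjTranspose_mul_self_eq {n : Type*} [Fintype n] (M : Matrix n n ℂ) :
    Matrix.trace (Mᴴ * M) = ((∑ j, ∑ i, Complex.normSq (M i j) : ℝ) : ℂ) := by
  push_cast
  simp only [Matrix.trace, Matrix.diag_apply, Matrix.mul_apply, Matrix.conjTranspose_apply,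
    Complex.normSq_eq_conj_mul_self]
  rfl

open Matrix in
lemma psd_trace_key {n : Type*} [Fintype n] [DecidableEq n] {A B : Matrix n n ℂ}
    (hA : A.PosSemidef) (hB : B.PosSemidef) :
    ∃ r : ℝ, 0 ≤ r ∧ Matrix.trace (A * B) = (r : ℂ) ∧
      (Matrix.trace (A * B) = 0 → A * B = 0) := by
  set S := CFC.sqrt A with hS
  set T := CFC.sqrt B with hT
  have hSh : Sᴴ = S := (CFC.sqrt_nonneg A).posSemidef.1
  have hTh : Tᴴ = T := (CFC.sqrt_nonneg B).posSemidef.1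
  have hAB : A * B = S * (S * T) * T := by
    rw [← CFC.sqrt_mul_sqrt_self A hA.nonneg, ← CFC.sqrt_mul_sqrt_self B hB.nonneg, ← hS, ← hT]
    noncomm_ring
  have hkey : Matrix.trace (A * B) = Matrix.trace ((S * T)ᴴ * (S * T)) := by
    rw [hAB, Matrix.conjTranspose_mul, hSh, hTh]
    rw [show S * (S * T) * T = (S * (S * T)) * T from rfl, Matrix.trace_mul_comm]
    noncomm_ring
  refine ⟨∑ j, ∑ i, Complex.normSq ((S * T) i j), ?_, ?_, ?_⟩
  · exact Finset.sum_nonneg fun j _ => Finset.sum_nonneg fun i _ => Complex.normSq_nonneg _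
  · rw [hkey, trace_conjTranspose_mul_self_eq]
  · intro h0
    rw [hkey, trace_conjTranspose_mul_self_eq] at h0
    have hreal : (∑ j, ∑ i, Complex.normSq ((S * T) i j) : ℝ) = 0 := by exact_mod_cast h0
    have hST : S * T = 0 := by
      ext i j
      have hj := (Finset.sum_eq_zero_iff_of_nonneg (fun j _ =>
        Finset.sum_nonneg fun i _ => Complex.normSq_nonneg ((S * T) i j))).mp hreal j
        (Finset.mem_univ j)
      have hi := (Finset.sum_eq_zero_iff_of_nonneg (fun i _ =>
        Complex.normSq_nonneg ((S * T) i j))).mp hj i (Finset.mem_univ i)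
      simpa using Complex.normSq_eq_zero.mp hi
    rw [hAB, hST, Matrix.mul_zero, Matrix.zero_mul]

lemma abs_sub_eq_add_iff {a b : ℝ} (ha : 0 ≤ a) (hb : 0 ≤ b) :
    |a - b| = a + b ↔ a = 0 ∨ b = 0 := by
  constructor
  · intro h
    have h2 : (a - b) ^ 2 = (a + b) ^ 2 := by rw [← sq_abs (a - b), h]
    have hab : a * b = 0 := by nlinarith
    exact mul_eq_zero.mp hab
  · rintro (rfl | rfl)
    · simp [abs_of_nonneg hb]
    · simp [abs_of_nonneg ha]

open Matrix in
/-- A POVM attains the trace distance between ρ and σ iff each element annihilates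
the positive or the negative part of ρ − σ. -/
theorem povm_trace_distance_optimal_iff
    {n ι : Type*} [Fintype n] [DecidableEq n] [Fintype ι]
    (rho sigma Qp Qm : Matrix n n ℂ)
    (hrho : rho.PosSemidef) (hsigma : sigma.PosSemidef)
    (htrr : rho.trace = 1) (htrs : sigma.trace = 1)
    (hQp : Qp.PosSemidef) (hQm : Qm.PosSemidef)
    (hdec : rho - sigma = Qp - Qm) (horth : Qp * Qm = 0)
    (E : ι → Matrix n n ℂ) (hE : ∀ m, (E m).PosSemidef) (hEsum : ∑ m, E m = 1) :
    ((∑ m, ‖Matrix.trace (E m * (rho - sigma))‖ : ℝ) : ℂ)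
        = Matrix.trace (psqrt ((rho - sigma)ᴴ * (rho - sigma))) ↔
      ∀ m, Qp * E m = 0 ∨ Qm * E m = 0 := by
  rw [hdec]
  -- Qm * Qp = 0
  have hmp : Qm * Qp = 0 := by
    have := congrArg Matrix.conjTranspose horth
    simpa [Matrix.conjTranspose_mul, hQp.1.eq, hQm.1.eq] using this
  -- (Qp - Qm)ᴴ * (Qp - Qm) = (Qp + Qm)^2
  have hherm : (Qp - Qm)ᴴ = Qp - Qm := by
    rw [Matrix.conjTranspose_sub, hQp.1.eq, hQm.1.eq]
  have hsq : (Qp - Qm)ᴴ * (Qp - Qm) = (Qp + Qm) ^ 2 := by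
    rw [hherm, pow_two]
    simp only [Matrix.sub_mul, Matrix.mul_sub, Matrix.add_mul, Matrix.mul_add, horth, hmp]
    abel
  have hpsd2 : ((Qp - Qm)ᴴ * (Qp - Qm)).PosSemidef := Matrix.posSemidef_conjTranspose_mul_self _
  have hRHS : psqrt ((Qp - Qm)ᴴ * (Qp - Qm)) = Qp + Qm := by
    rw [psqrt, dif_pos hpsd2]
    have hc : cfc Real.sqrt ((Qp - Qm)ᴴ * (Qp - Qm)) = Qp + Qm := by
      have h1 := CFC.sqrt_eq_real_sqrt _ hpsd2.nonneg
      rw [cfcₙ_eq_cfc] at h1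
      rw [← h1, hsq, CFC.sqrt_sq _ (hQp.add hQm).nonneg]
    rw [hpsd2.1.cfc_eq, Matrix.IsHermitian.cfc, Unitary.conjStarAlgAut_apply] at hc
    exact hc
  rw [hRHS]
  -- real nonneg traces
  have hap := fun m => psd_trace_key (hE m) hQp
  have ham := fun m => psd_trace_key (hE m) hQm
  choose a ha0 haeq hazero using hap
  choose b hb0 hbeq hbzero using ham
  -- per-term trace decomposition
  have htr : ∀ m, Matrix.trace (E m * (Qp - Qm)) = ((a m - b m : ℝ) : ℂ) := by
    intro m
    rw [Matrix.mul_sub, Matrix.trace_sub, haeq, hbeq]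
    push_cast; ring
  -- sums
  have hsuma : ((∑ m, a m : ℝ) : ℂ) = Matrix.trace Qp := by
    push_cast
    calc (∑ m, (a m : ℂ)) = ∑ m, Matrix.trace (E m * Qp) := by
          exact Finset.sum_congr rfl fun m _ => (haeq m).symm
      _ = Matrix.trace ((∑ m, E m) * Qp) := by
          rw [Finset.sum_mul, Matrix.trace_sum]
      _ = Matrix.trace Qp := by rw [hEsum, Matrix.one_mul]
  have hsumb : ((∑ m, b m : ℝ) : ℂ) = Matrix.trace Qm := by
    push_cast
    calc (∑ m, (b m : ℂ)) = ∑ m, Matrix.trace (E m * Qm) := by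
          exact Finset.sum_congr rfl fun m _ => (hbeq m).symm
      _ = Matrix.trace ((∑ m, E m) * Qm) := by
          rw [Finset.sum_mul, Matrix.trace_sum]
      _ = Matrix.trace Qm := by rw [hEsum, Matrix.one_mul]
  have hLHS : (∑ m, ‖Matrix.trace (E m * (Qp - Qm))‖ : ℝ)
      = ∑ m, |a m - b m| := by
    refine Finset.sum_congr rfl fun m _ => ?_
    rw [htr m, Complex.norm_real, Real.norm_eq_abs]
  have hRHS2 : Matrix.trace (Qp + Qm) = ((∑ m, (a m + b m) : ℝ) : ℂ) := by
    rw [Matrix.trace_add, ← hsuma, ← hsumb]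
    push_cast
    rw [Finset.sum_add_distrib]
  rw [hLHS, hRHS2]
  rw [Complex.ofReal_inj]
  -- now a real statement
  have hle : ∀ m ∈ Finset.univ, |a m - b m| ≤ a m + b m := fun m _ => by
    calc |a m - b m| ≤ |a m| + |b m| := abs_sub _ _
      _ = a m + b m := by rw [abs_of_nonneg (ha0 m), abs_of_nonneg (hb0 m)]
  rw [Finset.sum_eq_sum_iff_of_le hle]
  constructor
  · intro h m
    have := h m (Finset.mem_univ m)
    rcases (abs_sub_eq_add_iff (ha0 m) (hb0 m)).mp this with h0 | h0
    · left
      have : E m * Qp = 0 := hazero m (by rw [haeq m, h0]; norm_num)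
      have h2 := congrArg Matrix.conjTranspose this
      simpa [Matrix.conjTranspose_mul, hQp.1.eq, (hE m).1.eq] using h2
    · right
      have : E m * Qm = 0 := hbzero m (by rw [hbeq m, h0]; norm_num)
      have h2 := congrArg Matrix.conjTranspose this
      simpa [Matrix.conjTranspose_mul, hQm.1.eq, (hE m).1.eq] using h2
  · intro h m _
    rcases h m with h0 | h0
    · have : Matrix.trace (E m * Qp) = 0 := by
        rw [Matrix.trace_mul_comm, h0, Matrix.trace_zero]
      have ha' : a m = 0 := by
        have := (haeq m).symm.trans this
        exact_mod_cast this
      exact (abs_sub_eq_add_iff (ha0 m) (hb0 m)).mpr (Or.inl ha')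
    · have : Matrix.trace (E m * Qm) = 0 := by
        rw [Matrix.trace_mul_comm, h0, Matrix.trace_zero]
      have hb' : b m = 0 := by
        have := (hbeq m).symm.trans this
        exact_mod_cast this
      exact (abs_sub_eq_add_iff (ha0 m) (hb0 m)).mpr (Or.inr hb')
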